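/- Let D be a delta-matroid on [n]. Then U_D(u, v−1) = Σ_S u^{n−|S|} v^{a(S)} in ℤ[u,v], where the sum is over all admissible sets S that are independent in D and a(S) is the number of S-active elements of S. -/
import Mathlib


open Finset
open scoped symmDiff

/-- The rank-type function of a nonempty family `G` of subsets of `Fin n`, evaluated on an
admissible set `(Sp, Sn)`: `max_{F ∈ G} (|Sp ∩ F| + |Sn \ F| − |Sn ∩ F| − |Sp \ F|)`.
(Junk value `0` when the family is empty.) -/
noncomputable def gFam {n : ℕ} (G : Finset (Finset (Fin n))) (Sp Sn : Finset (Fin n)) : ℤ :=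
  if h : G.Nonempty then
    G.sup' h fun F => ((Sp ∩ F).card : ℤ) + ((Sn \ F).card : ℤ)
      - ((Sn ∩ F).card : ℤ) - ((Sp \ F).card : ℤ)
  else 0

/-- A delta-matroid on `[n]`: a nonempty family of subsets of `Fin n` (each `F` encoding the
size-`n` admissible set `(F, [n] \ F)`), satisfying the symmetric exchange axiom. -/
structure DeltaMatroid (n : ℕ) where
  feas : Finset (Finset (Fin n))
  nonempty : feas.Nonempty
  exchange : ∀ F₁ ∈ feas, ∀ F₂ ∈ feas, ∀ x ∈ F₁ ∆ F₂, ∃ y ∈ F₁ ∆ F₂, F₁ ∆ {x, y} ∈ feas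

/-- The rank function `g_D` of a delta-matroid, on admissible sets `(Sp, Sn)`. -/
noncomputable def DeltaMatroid.g {n : ℕ} (D : DeltaMatroid n) :
    Finset (Fin n) → Finset (Fin n) → ℤ :=
  gFam D.feas

/-- The U-polynomial of a family `G` on ground set `E`, in `ℤ[u,v]` with `u = X 0`, `v = X 1`:
`Σ_S u^{|E|−|S|} v^{(|S|−g(S))/2}`, the sum over admissible sets `S = (Sp, Sn)` on `E`. -/
noncomputable def Upoly {n : ℕ} (E : Finset (Fin n)) (G : Finset (Finset (Fin n))) :
    MvPolynomial (Fin 2) ℤ :=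
  ∑ Sp ∈ E.powerset, ∑ Sn ∈ (E \ Sp).powerset,
    (MvPolynomial.X 0) ^ (E.card - Sp.card - Sn.card) *
      (MvPolynomial.X 1) ^ ((((Sp.card + Sn.card : ℤ)) - gFam G Sp Sn).toNat / 2)

/-- The number of `S`-active elements of an independent admissible set `S = (Sp, Sn)`:
with `T = [n] \ (Sp ∪ Sn)` and `𝓕(T) = {F \ T : F ∈ 𝓕}` the feasible sets of the projection
`D(T)`, an element `i ∈ Sp ∪ Sn` is `S`-active if `Sp ∆ {i} ∉ 𝓕(T)` and there is no
`j ∈ Sp ∪ Sn` with `j < i` and `Sp ∆ {i, j} ∈ 𝓕(T)`. -/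
noncomputable def activeCard {n : ℕ} (D : DeltaMatroid n) (Sp Sn : Finset (Fin n)) : ℕ :=
  Set.ncard {i : Fin n | i ∈ Sp ∪ Sn ∧
    Sp ∆ ({i} : Finset (Fin n)) ∉ D.feas.image (· \ ((univ : Finset (Fin n)) \ (Sp ∪ Sn))) ∧
    ¬∃ j ∈ Sp ∪ Sn, j < i ∧
      Sp ∆ ({i, j} : Finset (Fin n)) ∈ D.feas.image (· \ ((univ : Finset (Fin n)) \ (Sp ∪ Sn)))}

namespace DMU
variable {n : ℕ}

/-- weight of a finset: sum of 2^i, in ℤ -/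
def wt (A : Finset (Fin n)) : ℤ := ∑ i ∈ A, (2:ℤ) ^ (i : ℕ)

lemma wt_nonneg (A : Finset (Fin n)) : 0 ≤ wt A :=
  Finset.sum_nonneg fun i _ => by positivity

lemma two_pow_le_wt {A : Finset (Fin n)} {m : Fin n} (h : m ∈ A) : (2:ℤ)^(m:ℕ) ≤ wt A := by
  unfold wt; exact Finset.single_le_sum (f := fun i : Fin n => (2:ℤ)^(i:ℕ)) (fun i _ => by positivity) h

lemma wt_lt_two_pow {A : Finset (Fin n)} {m : Fin n} (h : ∀ x ∈ A, x < m) :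
    wt A < (2:ℤ)^(m:ℕ) := by
  have hsub : A.image (Fin.val) ⊆ Finset.range (m:ℕ) := by
    intro k hk
    simp only [Finset.mem_image] at hk
    obtain ⟨x, hx, rfl⟩ := hk
    exact Finset.mem_range.2 (h x hx)
  have h1 : wt A = ∑ k ∈ A.image (Fin.val), (2:ℤ)^k := by
    rw [Finset.sum_image]
    · rfl
    · intro x _ y _ hxy; exact Fin.val_injective hxy
  have h2 : ∑ k ∈ A.image (Fin.val), (2:ℤ)^k ≤ ∑ k ∈ Finset.range (m:ℕ), (2:ℤ)^k :=
    Finset.sum_le_sum_of_subset_of_nonneg hsub (fun i _ _ => by positivity)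
  have h3 : ∀ N, ∑ k ∈ Finset.range N, (2:ℤ)^k = 2^N - 1 := by
    intro N; induction N with
    | zero => simp
    | succ N ih => rw [Finset.sum_range_succ, ih]; ring
  rw [h1]
  calc ∑ k ∈ A.image (Fin.val), (2:ℤ)^k ≤ 2^(m:ℕ) - 1 := by rw [← h3]; exact h2
    _ < 2^(m:ℕ) := by omega

lemma wt_symmDiff (B C : Finset (Fin n)) : wt (B ∆ C) = wt B + wt C - 2 * wt (B ∩ C) := by
  have h1 : B ∆ C = (B ∪ C) \ (B ∩ C) := by
    ext x; simp [Finset.mem_symmDiff]; tauto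
  have h2 : wt (B ∪ C) + wt (B ∩ C) = wt B + wt C := Finset.sum_union_inter
  have h3 : wt ((B ∪ C) \ (B ∩ C)) + wt (B ∩ C) = wt (B ∪ C) :=
    Finset.sum_sdiff (Finset.inter_subset_union)
  rw [h1]; omega

end DMU
namespace DMU2
open DMU
variable {n : ℕ}

/-- symmetric exchange property -/
def Exch (G : Finset (Finset (Fin n))) : Prop :=
  ∀ F₁ ∈ G, ∀ F₂ ∈ G, ∀ x ∈ F₁ ∆ F₂, ∃ y ∈ F₁ ∆ F₂, F₁ ∆ {x, y} ∈ G

/-- active elements of X w.r.t. family G on ground set W -/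
def Act (G : Finset (Finset (Fin n))) (W X : Finset (Fin n)) : Finset (Fin n) :=
  W.filter fun i => ∀ j ∈ W, j ≤ i → X ∆ {i, j} ∉ G

lemma symmDiff_subset_union (X F : Finset (Fin n)) : X ∆ F ⊆ X ∪ F := by
  intro x hx
  rw [Finset.mem_symmDiff] at hx
  rcases hx with ⟨h, _⟩ | ⟨h, _⟩
  · exact Finset.mem_union_left _ h
  · exact Finset.mem_union_right _ h

section
variable {G : Finset (Finset (Fin n))} {W : Finset (Fin n)}

lemma mem_W_of_mem_symmDiff (hGW : ∀ F ∈ G, F ⊆ W) {X F : Finset (Fin n)} (hX : X ∈ G)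
    (hF : F ∈ G) {x : Fin n} (hx : x ∈ X ∆ F) : x ∈ W := by
  rcases Finset.mem_union.1 (symmDiff_subset_union X F hx) with h | h
  · exact hGW X hX h
  · exact hGW F hF h

/-- L1: the maximum of `X ∆ F` is not `X`-active. -/
lemma max_not_act (hex : Exch G) (hGW : ∀ F ∈ G, F ⊆ W) {X F : Finset (Fin n)}
    (hX : X ∈ G) (hF : F ∈ G) (hne : (X ∆ F).Nonempty) :
    (X ∆ F).max' hne ∉ Act G W X := by
  intro hact
  obtain ⟨y, hy, hmem⟩ := hex X hX F hF _ ((X ∆ F).max'_mem hne)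
  rw [Act, Finset.mem_filter] at hact
  exact hact.2 y (mem_W_of_mem_symmDiff hGW hX hF hy) ((X ∆ F).le_max' y hy) hmem

/-- L2 (half lemma), induction form -/
lemma half_aux (hex : Exch G) (hGW : ∀ F ∈ G, F ⊆ W) {X : Finset (Fin n)} (hX : X ∈ G) :
    ∀ k, ∀ F ∈ G, (X ∆ F).card ≤ k →
      2 * ((Act G W X) ∩ (X ∆ F)).card ≤ (X ∆ F).card := by
  intro k
  induction k with
  | zero =>
    intro F hF hcard
    have : ((Act G W X) ∩ (X ∆ F)).card ≤ (X ∆ F).card :=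
      Finset.card_le_card (Finset.inter_subset_right)
    omega
  | succ k ih =>
    intro F hF hcard
    rcases Finset.eq_empty_or_nonempty (X ∆ F) with he | hne
    · simp [he]
    · set D := X ∆ F with hD
      set m := D.max' hne with hm
      have hmD : m ∈ D := D.max'_mem hne
      have hmA : m ∉ Act G W X := max_not_act hex hGW hX hF hne
      -- exchange from F towards X at m
      have hmFX : m ∈ F ∆ X := by rwa [symmDiff_comm]
      obtain ⟨y, hy, hmem⟩ := hex F hF X hX m hmFX
      have hyD : y ∈ D := by rwa [symmDiff_comm F X] at hy
      set F' := F ∆ {m, y} with hF'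
      have hXF' : X ∆ F' = D ∆ {m, y} := by
        rw [hF', hD, symmDiff_assoc]
      by_cases hym : y = m
      · -- D' = D.erase m
        have hpair : ({m, y} : Finset (Fin n)) = {m} := by rw [hym]; simp
        have hD' : X ∆ F' = D \ {m} := by
          rw [hXF', hpair, symmDiff_of_ge (Finset.singleton_subset_iff.2 hmD)]
        have hcard' : (X ∆ F').card ≤ k := by
          rw [hD', Finset.card_sdiff_of_subset (Finset.singleton_subset_iff.2 hmD)]
          simp only [Finset.card_singleton]
          omega
        have hih := ih F' hmem hcard'
        have hinter : (Act G W X) ∩ (X ∆ F') = (Act G W X) ∩ D := by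
          rw [hD']
          ext x
          simp only [Finset.mem_inter, Finset.mem_sdiff, Finset.mem_singleton]
          constructor
          · rintro ⟨h1, h2, _⟩; exact ⟨h1, h2⟩
          · rintro ⟨h1, h2⟩
            refine ⟨h1, h2, ?_⟩
            rintro rfl; exact hmA h1
        have hDcard : (X ∆ F').card = D.card - 1 := by
          rw [hD', Finset.card_sdiff_of_subset (Finset.singleton_subset_iff.2 hmD)]
          simp
        rw [hinter] at hih
        have hDpos : 0 < D.card := Finset.card_pos.2 hne
        omega
      · -- y ≠ m, D' = D \ {m, y}
        have hsub : ({m, y} : Finset (Fin n)) ⊆ D := by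
          intro x hx
          rcases Finset.mem_insert.1 hx with rfl | hx
          · exact hmD
          · rw [Finset.mem_singleton] at hx; subst hx; exact hyD
        have hD' : X ∆ F' = D \ {m, y} := by
          rw [hXF', symmDiff_of_ge hsub]
        have hpaircard : ({m, y} : Finset (Fin n)).card = 2 := by
          rw [Finset.card_insert_of_notMem (by simp [Ne.symm hym]), Finset.card_singleton]
        have hDcard : (X ∆ F').card = D.card - 2 := by
          rw [hD', Finset.card_sdiff_of_subset hsub, hpaircard]
        have hge2 : 2 ≤ D.card := hpaircard ▸ Finset.card_le_card hsub
        have hcard' : (X ∆ F').card ≤ k := by omega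
        have hih := ih F' hmem hcard'
        have hsub2 : (Act G W X) ∩ D ⊆ insert y ((Act G W X) ∩ (X ∆ F')) := by
          intro x hx
          rw [Finset.mem_inter] at hx
          by_cases hxy : x = y
          · exact Finset.mem_insert.2 (Or.inl hxy)
          · refine Finset.mem_insert.2 (Or.inr ?_)
            rw [hD', Finset.mem_inter, Finset.mem_sdiff]
            refine ⟨hx.1, hx.2, ?_⟩
            intro hmem2
            rcases Finset.mem_insert.1 hmem2 with rfl | h2
            · exact hmA hx.1
            · rw [Finset.mem_singleton] at h2; exact hxy h2
        have hle : ((Act G W X) ∩ D).card ≤ ((Act G W X) ∩ (X ∆ F')).card + 1 := by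
          calc ((Act G W X) ∩ D).card ≤ (insert y ((Act G W X) ∩ (X ∆ F'))).card :=
                Finset.card_le_card hsub2
            _ ≤ ((Act G W X) ∩ (X ∆ F')).card + 1 := Finset.card_insert_le _ _
        omega

lemma half (hex : Exch G) (hGW : ∀ F ∈ G, F ⊆ W) {X F : Finset (Fin n)} (hX : X ∈ G)
    (hF : F ∈ G) : 2 * ((Act G W X) ∩ (X ∆ F)).card ≤ (X ∆ F).card :=
  half_aux hex hGW hX (X ∆ F).card F hF le_rfl

end
end DMU2
namespace DMU2
open DMU
variable {n : ℕ} {G : Finset (Finset (Fin n))} {W : Finset (Fin n)}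

/-- existence of a center -/
lemma exists_center (hne : G.Nonempty) (hex : Exch G) (hGW : ∀ F ∈ G, F ⊆ W)
    {Z : Finset (Fin n)} (hZ : Z ⊆ W) :
    ∃ X ∈ G, Z ∆ X ⊆ Act G W X := by
  obtain ⟨X, hX, hmin⟩ := G.exists_min_image (fun F => wt (Z ∆ F)) hne
  refine ⟨X, hX, ?_⟩
  intro i hi
  by_contra hni
  have hiW : i ∈ W := by
    rcases Finset.mem_union.1 (symmDiff_subset_union Z X hi) with h | h
    · exact hZ h
    · exact hGW X hX h
  rw [Act, Finset.mem_filter] at hni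
  push_neg at hni
  obtain ⟨j, hjW, hji, hmem⟩ := hni hiW
  have hmin' := hmin _ hmem
  have hZX' : Z ∆ (X ∆ {i, j}) = (Z ∆ X) ∆ {i, j} := by rw [symmDiff_assoc]
  rw [hZX', wt_symmDiff (Z ∆ X) {i, j}] at hmin'
  by_cases hij : j = i
  · have hpair : ({i, j} : Finset (Fin n)) = {i} := by rw [hij]; simp
    rw [hpair] at hmin'
    have hint : (Z ∆ X) ∩ ({i} : Finset (Fin n)) = {i} :=
      Finset.inter_eq_right.2 (Finset.singleton_subset_iff.2 hi)
    rw [hint] at hmin'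
    have : (0:ℤ) < 2 ^ (i:ℕ) := by positivity
    have hwti : wt ({i} : Finset (Fin n)) = 2 ^ (i:ℕ) := by
      rw [wt, Finset.sum_singleton]
    rw [hwti] at hmin'
    omega
  · have hjilt : j < i := lt_of_le_of_ne hji hij
    have hwtpair : wt ({i, j} : Finset (Fin n)) = 2 ^ (i:ℕ) + 2 ^ (j:ℕ) := by
      rw [wt, Finset.sum_pair (fun h => hij h.symm)]
    by_cases hjB : j ∈ Z ∆ X
    · have hint : (Z ∆ X) ∩ ({i, j} : Finset (Fin n)) = {i, j} :=
        Finset.inter_eq_right.2 (Finset.insert_subset hi (Finset.singleton_subset_iff.2 hjB))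
      rw [hint, hwtpair] at hmin'
      have h1 : (0:ℤ) < 2 ^ (i:ℕ) := by positivity
      have h2 : (0:ℤ) < 2 ^ (j:ℕ) := by positivity
      omega
    · have hint : (Z ∆ X) ∩ ({i, j} : Finset (Fin n)) = {i} := by
        ext x
        simp only [Finset.mem_inter, Finset.mem_insert, Finset.mem_singleton]
        constructor
        · rintro ⟨hxB, rfl | rfl⟩
          · rfl
          · exact absurd hxB hjB
        · rintro rfl; exact ⟨hi, Or.inl rfl⟩
      rw [hint, hwtpair] at hmin'
      have hwti : wt ({i} : Finset (Fin n)) = 2 ^ (i:ℕ) := by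
        rw [wt, Finset.sum_singleton]
      rw [hwti] at hmin'
      have hlt : (2:ℤ) ^ (j:ℕ) < 2 ^ (i:ℕ) := by
        apply pow_lt_pow_right₀ (by norm_num)
        exact hjilt
      omega

/-- a center has strictly smaller weight than any other feasible set -/
lemma center_wt_lt (hex : Exch G) (hGW : ∀ F ∈ G, F ⊆ W) {X F : Finset (Fin n)}
    (hX : X ∈ G) (hF : F ∈ G) (hXF : X ≠ F) {Z : Finset (Fin n)}
    (hZX : Z ∆ X ⊆ Act G W X) : wt (Z ∆ X) < wt (Z ∆ F) := by
  have hDne : (X ∆ F).Nonempty := by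
    rw [Finset.nonempty_iff_ne_empty]
    intro h
    exact hXF (symmDiff_eq_bot.mp (h.trans Finset.bot_eq_empty.symm))
  set D := X ∆ F with hD
  set m := D.max' hDne with hm
  have hmD : m ∈ D := D.max'_mem hDne
  have hmA : m ∉ Act G W X := max_not_act hex hGW hX hF hDne
  have hDeq : (Z ∆ X) ∆ (Z ∆ F) = D := by
    rw [hD, symmDiff_symmDiff_symmDiff_comm, symmDiff_self]
    simp
  have hmZX : m ∉ Z ∆ X := fun h => hmA (hZX h)
  have hmZF : m ∈ Z ∆ F := by
    have := hDeq ▸ hmD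
    rw [Finset.mem_symmDiff] at this
    rcases this with ⟨h, _⟩ | ⟨h, _⟩
    · exact absurd h hmZX
    · exact h
  have hd1 : wt ((Z ∆ X) ∩ (Z ∆ F)) + wt ((Z ∆ X) \ (Z ∆ F)) = wt (Z ∆ X) :=
    Finset.sum_inter_add_sum_sdiff _ _ _
  have hd2 : wt ((Z ∆ F) ∩ (Z ∆ X)) + wt ((Z ∆ F) \ (Z ∆ X)) = wt (Z ∆ F) :=
    Finset.sum_inter_add_sum_sdiff _ _ _
  have hcomm : (Z ∆ X) ∩ (Z ∆ F) = (Z ∆ F) ∩ (Z ∆ X) := Finset.inter_comm _ _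
  have hkey : wt ((Z ∆ X) \ (Z ∆ F)) < wt ((Z ∆ F) \ (Z ∆ X)) := by
    have h1 : wt ((Z ∆ X) \ (Z ∆ F)) < 2 ^ (m:ℕ) := by
      apply wt_lt_two_pow
      intro x hx
      rw [Finset.mem_sdiff] at hx
      have hxD : x ∈ D := by
        rw [← hDeq, Finset.mem_symmDiff]
        exact Or.inl ⟨hx.1, hx.2⟩
      have hxm : x ≤ m := D.le_max' x hxD
      have : x ≠ m := by rintro rfl; exact hmZX hx.1
      exact lt_of_le_of_ne hxm this
    have h2 : (2:ℤ) ^ (m:ℕ) ≤ wt ((Z ∆ F) \ (Z ∆ X)) := by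
      apply two_pow_le_wt
      rw [Finset.mem_sdiff]
      exact ⟨hmZF, hmZX⟩
    omega
  have hcw : wt ((Z ∆ X) ∩ (Z ∆ F)) = wt ((Z ∆ F) ∩ (Z ∆ X)) := by rw [hcomm]
  omega

lemma center_unique (hex : Exch G) (hGW : ∀ F ∈ G, F ⊆ W) {X₁ X₂ : Finset (Fin n)}
    (hX₁ : X₁ ∈ G) (hX₂ : X₂ ∈ G) {Z : Finset (Fin n)}
    (h₁ : Z ∆ X₁ ⊆ Act G W X₁) (h₂ : Z ∆ X₂ ⊆ Act G W X₂) : X₁ = X₂ := by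
  by_contra hne
  have a1 := center_wt_lt hex hGW hX₁ hX₂ hne h₁
  have a2 := center_wt_lt hex hGW hX₂ hX₁ (Ne.symm hne) h₂
  omega

/-- the center achieves the distance -/
lemma center_card_le (hex : Exch G) (hGW : ∀ F ∈ G, F ⊆ W) {X F : Finset (Fin n)}
    (hX : X ∈ G) (hF : F ∈ G) {Z : Finset (Fin n)}
    (hZX : Z ∆ X ⊆ Act G W X) : (Z ∆ X).card ≤ (Z ∆ F).card := by
  set Y := Z ∆ X with hY
  set D := X ∆ F with hD
  have hZF : Z ∆ F = Y ∆ D := by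
    rw [hY, hD, ← symmDiff_assoc, symmDiff_symmDiff_cancel_right]
  have hcard1 : (Y ∆ D).card = (Y \ D).card + (D \ Y).card := by
    rw [symmDiff_def]
    exact Finset.card_union_of_disjoint disjoint_sdiff_sdiff
  have hcard2 : (Y \ D).card + (Y ∩ D).card = Y.card := Finset.card_sdiff_add_card_inter _ _
  have hcard3 : (D \ Y).card + (D ∩ Y).card = D.card := Finset.card_sdiff_add_card_inter _ _
  have hYA : Y ∩ D ⊆ (Act G W X) ∩ D := Finset.inter_subset_inter_right hZX
  have hIC : (Y ∩ D).card = (D ∩ Y).card := by rw [Finset.inter_comm]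
  have hhalf := half hex hGW hX hF
  rw [← hD] at hhalf
  have hYAc : (Y ∩ D).card ≤ ((Act G W X) ∩ D).card := Finset.card_le_card hYA
  rw [hZF, hcard1]
  omega

end DMU2
namespace DMU2
open DMU
variable {n : ℕ}

lemma sum_powerset_pow {R : Type*} [CommRing R] (A : Finset (Fin n)) (t : R) :
    ∑ Y ∈ A.powerset, t ^ Y.card = (t + 1) ^ A.card := by
  induction A using Finset.induction_on with
  | empty => simp
  | @insert a A ha ih =>
    rw [Finset.powerset_insert, Finset.sum_union, Finset.sum_image]
    · have h2 : ∀ Y ∈ A.powerset, t ^ (insert a Y).card = t * t ^ Y.card := by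
        intro Y hY
        rw [Finset.card_insert_of_notMem (fun h => ha (Finset.mem_powerset.1 hY h)),
          pow_succ]
        ring
      rw [Finset.sum_congr rfl h2, ← Finset.mul_sum, ih,
        Finset.card_insert_of_notMem ha, pow_succ]
      ring
    · intro Y hY Y' hY' h
      have haY : a ∉ Y := fun hc => ha (Finset.mem_powerset.1 hY hc)
      have haY' : a ∉ Y' := fun hc => ha (Finset.mem_powerset.1 hY' hc)
      have := congrArg (fun s => Finset.erase s a) h
      simpa [Finset.erase_insert haY, Finset.erase_insert haY'] using this
    · rw [Finset.disjoint_right]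
      intro Y hY hY2
      rw [Finset.mem_image] at hY
      obtain ⟨Y', _, rfl⟩ := hY
      exact ha (Finset.mem_powerset.1 hY2 (Finset.mem_insert_self a Y'))

variable {G : Finset (Finset (Fin n))} {W : Finset (Fin n)}

lemma dist_eq (hne : G.Nonempty) (hex : Exch G) (hGW : ∀ F ∈ G, F ⊆ W)
    {X Y : Finset (Fin n)} (hX : X ∈ G) (hY : Y ⊆ Act G W X) :
    (G.inf' hne fun F => ((X ∆ Y) ∆ F).card) = Y.card := by
  have hZX : (X ∆ Y) ∆ X = Y := by
    rw [symmDiff_comm X Y, symmDiff_symmDiff_cancel_right]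
  apply le_antisymm
  · have := Finset.inf'_le (fun F => ((X ∆ Y) ∆ F).card) hX
    rwa [hZX] at this
  · apply Finset.le_inf'
    intro F hF
    have := center_card_le hex hGW hX hF (Z := X ∆ Y) (by rw [hZX]; exact hY)
    rwa [hZX] at this

/-- total-function version of the center -/
noncomputable def ctr (hne : G.Nonempty) (hex : Exch G) (hGW : ∀ F ∈ G, F ⊆ W)
    (Z : Finset (Fin n)) : Finset (Fin n) :=
  if h : Z ⊆ W then Classical.choose (exists_center hne hex hGW h) else ∅

lemma ctr_spec (hne : G.Nonempty) (hex : Exch G) (hGW : ∀ F ∈ G, F ⊆ W)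
    {Z : Finset (Fin n)} (hZ : Z ⊆ W) :
    ctr hne hex hGW Z ∈ G ∧ Z ∆ ctr hne hex hGW Z ⊆ Act G W (ctr hne hex hGW Z) := by
  rw [ctr, dif_pos hZ]
  exact ⟨(Classical.choose_spec (exists_center hne hex hGW hZ)).1,
    (Classical.choose_spec (exists_center hne hex hGW hZ)).2⟩

/-- The cube identity. -/
theorem cube_identity (hne : G.Nonempty) (hex : Exch G) (hGW : ∀ F ∈ G, F ⊆ W) :
    ∑ Z ∈ W.powerset, (MvPolynomial.X 1 - 1 : MvPolynomial (Fin 2) ℤ)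
        ^ (G.inf' hne fun F => (Z ∆ F).card)
      = ∑ X ∈ G, (MvPolynomial.X 1 : MvPolynomial (Fin 2) ℤ) ^ (Act G W X).card := by
  have hbin : ∀ X ∈ G, (MvPolynomial.X 1 : MvPolynomial (Fin 2) ℤ) ^ (Act G W X).card
      = ∑ Y ∈ (Act G W X).powerset,
          (MvPolynomial.X 1 - 1 : MvPolynomial (Fin 2) ℤ) ^ Y.card := by
    intro X _
    rw [sum_powerset_pow]
    norm_num
  rw [Finset.sum_congr rfl hbin, Finset.sum_sigma' G (fun X => (Act G W X).powerset)
    (fun _ Y => (MvPolynomial.X 1 - 1 : MvPolynomial (Fin 2) ℤ) ^ Y.card)]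
  symm
  refine Finset.sum_bij' (fun p _ => p.1 ∆ p.2)
    (fun Z _ => ⟨ctr hne hex hGW Z, Z ∆ ctr hne hex hGW Z⟩) ?_ ?_ ?_ ?_ ?_
  · -- hi
    rintro ⟨X, Y⟩ hp
    rw [Finset.mem_sigma] at hp
    rw [Finset.mem_powerset]
    intro x hx
    rcases Finset.mem_union.1 (symmDiff_subset_union _ _ hx) with h | h
    · exact hGW _ hp.1 h
    · exact (Finset.mem_filter.1 (Finset.mem_powerset.1 hp.2 h)).1
  · -- hj
    intro Z hZ
    have hspec := ctr_spec hne hex hGW (Finset.mem_powerset.1 hZ)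
    rw [Finset.mem_sigma]
    exact ⟨hspec.1, Finset.mem_powerset.2 hspec.2⟩
  · -- left_inv
    rintro ⟨X, Y⟩ hp
    rw [Finset.mem_sigma] at hp
    have hYA : Y ⊆ Act G W X := Finset.mem_powerset.1 hp.2
    have hZW : X ∆ Y ⊆ W := by
      intro x hx
      rcases Finset.mem_union.1 (symmDiff_subset_union _ _ hx) with h | h
      · exact hGW _ hp.1 h
      · exact (Finset.mem_filter.1 (hYA h)).1
    have hspec := ctr_spec hne hex hGW hZW
    have hYsub : (X ∆ Y) ∆ X ⊆ Act G W X := by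
      rw [symmDiff_comm X Y, symmDiff_symmDiff_cancel_right]
      exact hYA
    have hcen : ctr hne hex hGW (X ∆ Y) = X :=
      center_unique hex hGW hspec.1 hp.1 hspec.2 hYsub
    show (⟨ctr hne hex hGW (X ∆ Y), (X ∆ Y) ∆ ctr hne hex hGW (X ∆ Y)⟩ :
        Σ _ : Finset (Fin n), Finset (Fin n)) = ⟨X, Y⟩
    rw [hcen, symmDiff_comm X Y, symmDiff_symmDiff_cancel_right]
  · -- right_inv
    intro Z hZ
    show ctr hne hex hGW Z ∆ (Z ∆ ctr hne hex hGW Z) = Z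
    rw [symmDiff_comm Z _, symmDiff_symmDiff_cancel_left]
  · -- values
    rintro ⟨X, Y⟩ hp
    rw [Finset.mem_sigma] at hp
    show _ = (MvPolynomial.X 1 - 1 : MvPolynomial (Fin 2) ℤ)
        ^ (G.inf' hne fun F => ((X ∆ Y) ∆ F).card)
    rw [dist_eq hne hex hGW hp.1 (Finset.mem_powerset.1 hp.2)]

end DMU2
namespace DMU2
open DMU
variable {n : ℕ}

lemma sdiff_symmDiff_sdiff (F₁ F₂ T : Finset (Fin n)) :
    (F₁ \ T) ∆ (F₂ \ T) = (F₁ ∆ F₂) \ T := by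
  ext x
  simp only [Finset.mem_symmDiff, Finset.mem_sdiff]
  tauto

/-- projections of exchange families are exchange families -/
lemma exch_proj {G : Finset (Finset (Fin n))} (hex : Exch G) (T : Finset (Fin n)) :
    Exch (G.image (· \ T)) := by
  intro H₁ h₁ H₂ h₂ x hx
  obtain ⟨F₁, hF₁, rfl⟩ := Finset.mem_image.1 h₁
  obtain ⟨F₂, hF₂, rfl⟩ := Finset.mem_image.1 h₂
  rw [sdiff_symmDiff_sdiff, Finset.mem_sdiff] at hx
  obtain ⟨y, hy, hmem⟩ := hex F₁ hF₁ F₂ hF₂ x hx.1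
  by_cases hyT : y ∈ T
  · refine ⟨x, ?_, ?_⟩
    · rw [sdiff_symmDiff_sdiff, Finset.mem_sdiff]; exact hx
    · have hxx : ({x, x} : Finset (Fin n)) = {x} := by simp
      rw [hxx]
      refine Finset.mem_image.2 ⟨F₁ ∆ {x, y}, hmem, ?_⟩
      rw [← sdiff_symmDiff_sdiff]
      congr 1
      ext z
      simp only [Finset.mem_sdiff, Finset.mem_insert, Finset.mem_singleton]
      constructor
      · rintro ⟨rfl | rfl, hz⟩
        · rfl
        · exact absurd hyT hz
      · rintro rfl; exact ⟨Or.inl rfl, hx.2⟩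
  · refine ⟨y, ?_, ?_⟩
    · rw [sdiff_symmDiff_sdiff, Finset.mem_sdiff]; exact ⟨hy, hyT⟩
    · refine Finset.mem_image.2 ⟨F₁ ∆ {x, y}, hmem, ?_⟩
      rw [← sdiff_symmDiff_sdiff]
      congr 1
      ext z
      simp only [Finset.mem_sdiff, Finset.mem_insert, Finset.mem_singleton]
      constructor
      · rintro ⟨h, _⟩; exact h
      · rintro (rfl | rfl)
        · exact ⟨Or.inl rfl, hx.2⟩
        · exact ⟨Or.inr rfl, hyT⟩

lemma sdiff_compl_eq_inter {F W : Finset (Fin n)} :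
    F \ ((Finset.univ : Finset (Fin n)) \ W) = F ∩ W := by
  ext x; simp

lemma proj_subset {G : Finset (Finset (Fin n))} {W H : Finset (Fin n)}
    (hH : H ∈ G.image (· \ ((Finset.univ : Finset (Fin n)) \ W))) : H ⊆ W := by
  obtain ⟨F, _, rfl⟩ := Finset.mem_image.1 hH
  rw [sdiff_compl_eq_inter]
  exact Finset.inter_subset_right

end DMU2
namespace DMU2
open DMU
variable {n : ℕ}

lemma term_eq {Sp Sn F : Finset (Fin n)} (hdisj : Disjoint Sp Sn) :
    ((Sp ∩ F).card : ℤ) + ((Sn \ F).card : ℤ) - ((Sn ∩ F).card : ℤ) - ((Sp \ F).card : ℤ)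
      = ((Sp.card + Sn.card : ℤ))
        - 2 * (((Sp ∆ (F \ ((Finset.univ : Finset (Fin n)) \ (Sp ∪ Sn)))).card : ℤ)) := by
  have hFT : F \ ((Finset.univ : Finset (Fin n)) \ (Sp ∪ Sn)) = F ∩ (Sp ∪ Sn) :=
    sdiff_compl_eq_inter
  have h1 : Sp \ (F ∩ (Sp ∪ Sn)) = Sp \ F := by
    ext x
    simp only [Finset.mem_sdiff, Finset.mem_inter, Finset.mem_union]
    constructor
    · rintro ⟨hx, h⟩; exact ⟨hx, fun hF => h ⟨hF, Or.inl hx⟩⟩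
    · rintro ⟨hx, h⟩; exact ⟨hx, fun hc => h hc.1⟩
  have h2 : (F ∩ (Sp ∪ Sn)) \ Sp = F ∩ Sn := by
    ext x
    simp only [Finset.mem_sdiff, Finset.mem_inter, Finset.mem_union]
    constructor
    · rintro ⟨⟨hF, hSp | hSn⟩, h⟩
      · exact absurd hSp h
      · exact ⟨hF, hSn⟩
    · rintro ⟨hF, hSn⟩
      exact ⟨⟨hF, Or.inr hSn⟩, fun hc => (Finset.disjoint_left.1 hdisj) hc hSn⟩
  have hcard : (Sp ∆ (F ∩ (Sp ∪ Sn))).card = (Sp \ F).card + (Sn ∩ F).card := by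
    rw [symmDiff_def, Finset.sup_eq_union,
      Finset.card_union_of_disjoint disjoint_sdiff_sdiff, h1, h2, Finset.inter_comm]
  have e1 : (Sp ∩ F).card + (Sp \ F).card = Sp.card := Finset.card_inter_add_card_sdiff _ _
  have e2 : (Sn ∩ F).card + (Sn \ F).card = Sn.card := Finset.card_inter_add_card_sdiff _ _
  rw [hFT, hcard]
  push_cast
  omega

lemma exponent_eq {G : Finset (Finset (Fin n))} (hne : G.Nonempty) {Sp Sn : Finset (Fin n)}
    (hdisj : Disjoint Sp Sn) :
    (((Sp.card + Sn.card : ℤ)) - gFam G Sp Sn).toNat / 2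
      = G.inf' hne fun F =>
          (Sp ∆ (F \ ((Finset.univ : Finset (Fin n)) \ (Sp ∪ Sn)))).card := by
  set d := G.inf' hne fun F =>
    (Sp ∆ (F \ ((Finset.univ : Finset (Fin n)) \ (Sp ∪ Sn)))).card with hd
  have hg : gFam G Sp Sn = ((Sp.card + Sn.card : ℤ)) - 2 * (d : ℤ) := by
    rw [gFam, dif_pos hne]
    apply le_antisymm
    · apply Finset.sup'_le
      intro F hF
      rw [term_eq hdisj]
      have hdle : d ≤ (Sp ∆ (F \ ((Finset.univ : Finset (Fin n)) \ (Sp ∪ Sn)))).card :=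
        Finset.inf'_le _ hF
      have : (d : ℤ) ≤ ((Sp ∆ (F \ ((Finset.univ : Finset (Fin n)) \ (Sp ∪ Sn)))).card : ℤ) := by
        exact_mod_cast hdle
      omega
    · obtain ⟨F₀, hF₀, hEq⟩ := Finset.exists_mem_eq_inf' hne fun F =>
        (Sp ∆ (F \ ((Finset.univ : Finset (Fin n)) \ (Sp ∪ Sn)))).card
      have hle := Finset.le_sup' (f := fun F => ((Sp ∩ F).card : ℤ) + ((Sn \ F).card : ℤ)
        - ((Sn ∩ F).card : ℤ) - ((Sp \ F).card : ℤ)) hF₀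
      rw [term_eq hdisj] at hle
      have hdF : d = (Sp ∆ (F₀ \ ((Finset.univ : Finset (Fin n)) \ (Sp ∪ Sn)))).card :=
        hd.trans hEq
      rw [hdF]
      exact hle
  rw [hg]
  omega

lemma indep_iff {G : Finset (Finset (Fin n))} {W Sp : Finset (Fin n)} (hSp : Sp ⊆ W) :
    (∃ F ∈ G, Sp ⊆ F ∧ Disjoint (W \ Sp) F)
      ↔ Sp ∈ G.image (· \ ((Finset.univ : Finset (Fin n)) \ W)) := by
  constructor
  · rintro ⟨F, hF, h1, h2⟩
    refine Finset.mem_image.2 ⟨F, hF, ?_⟩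
    rw [sdiff_compl_eq_inter]
    ext x
    rw [Finset.mem_inter]
    constructor
    · rintro ⟨hxF, hxW⟩
      by_contra hxSp
      exact Finset.disjoint_left.1 h2 (Finset.mem_sdiff.2 ⟨hxW, hxSp⟩) hxF
    · intro hx
      exact ⟨h1 hx, hSp hx⟩
  · intro h
    obtain ⟨F, hF, hFe⟩ := Finset.mem_image.1 h
    rw [sdiff_compl_eq_inter] at hFe
    refine ⟨F, hF, ?_, ?_⟩
    · rw [← hFe]; exact Finset.inter_subset_left
    · rw [Finset.disjoint_left]
      intro x hx hxF
      rw [Finset.mem_sdiff] at hx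
      exact hx.2 (hFe ▸ Finset.mem_inter.2 ⟨hxF, hx.1⟩)

lemma active_eq (D : DeltaMatroid n) (Sp Sn : Finset (Fin n)) :
    activeCard D Sp Sn
      = (Act (D.feas.image (· \ ((Finset.univ : Finset (Fin n)) \ (Sp ∪ Sn))))
          (Sp ∪ Sn) Sp).card := by
  rw [activeCard]
  have hset : {i : Fin n | i ∈ Sp ∪ Sn ∧
      Sp ∆ ({i} : Finset (Fin n)) ∉ D.feas.image (· \ ((Finset.univ : Finset (Fin n)) \ (Sp ∪ Sn))) ∧
      ¬∃ j ∈ Sp ∪ Sn, j < i ∧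
        Sp ∆ ({i, j} : Finset (Fin n)) ∈ D.feas.image (· \ ((Finset.univ : Finset (Fin n)) \ (Sp ∪ Sn)))}
      = ↑(Act (D.feas.image (· \ ((Finset.univ : Finset (Fin n)) \ (Sp ∪ Sn))))
          (Sp ∪ Sn) Sp) := by
    ext i
    simp only [Set.mem_setOf_eq, Act, Finset.coe_filter, Finset.mem_coe, Finset.mem_filter]
    constructor
    · rintro ⟨hiW, h1, h2⟩
      refine ⟨hiW, ?_⟩
      intro j hjW hji
      rcases lt_or_eq_of_le hji with hlt | heq
      · exact fun hmem => h2 ⟨j, hjW, hlt, hmem⟩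
      · subst heq
        have hpair : ({j, j} : Finset (Fin n)) = {j} := by simp
        rw [hpair]
        exact h1
    · rintro ⟨hiW, h⟩
      refine ⟨hiW, ?_, ?_⟩
      · have := h i hiW le_rfl
        simpa using this
      · rintro ⟨j, hjW, hlt, hmem⟩
        exact h j hjW hlt.le hmem
  rw [hset, Set.ncard_coe_finset]

end DMU2
namespace DMU2
open DMU
variable {n : ℕ}

lemma inf'_image_eq {s : Finset (Finset (Fin n))} (h : s.Nonempty)
    (f : Finset (Fin n) → Finset (Fin n)) (g : Finset (Fin n) → ℕ) :
    (s.image f).inf' (h.image f) g = s.inf' h (fun F => g (f F)) := by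
  apply le_antisymm
  · obtain ⟨F₀, hF₀, hEq⟩ := Finset.exists_mem_eq_inf' h (fun F => g (f F))
    rw [hEq]
    exact Finset.inf'_le _ (Finset.mem_image_of_mem f hF₀)
  · apply Finset.le_inf'
    intro b hb
    obtain ⟨F, hF, rfl⟩ := Finset.mem_image.1 hb
    exact Finset.inf'_le _ hF

lemma sum_pairs {M : Type*} [AddCommMonoid M] (f : Finset (Fin n) → Finset (Fin n) → M) :
    ∑ Sp ∈ (Finset.univ : Finset (Fin n)).powerset,
        ∑ Sn ∈ ((Finset.univ : Finset (Fin n)) \ Sp).powerset, f Sp Sn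
      = ∑ W ∈ (Finset.univ : Finset (Fin n)).powerset,
          ∑ Sp ∈ W.powerset, f Sp (W \ Sp) := by
  rw [Finset.sum_sigma' _ _ (fun Sp Sn => f Sp Sn),
    Finset.sum_sigma' _ _ (fun W Sp => f Sp (W \ Sp))]
  refine Finset.sum_bij'
    (fun p _ => (⟨p.1 ∪ p.2, p.1⟩ : Σ _ : Finset (Fin n), Finset (Fin n)))
    (fun q _ => (⟨q.2, q.1 \ q.2⟩ : Σ _ : Finset (Fin n), Finset (Fin n)))
    ?_ ?_ ?_ ?_ ?_
  · rintro ⟨Sp, Sn⟩ _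
    rw [Finset.mem_sigma]
    exact ⟨Finset.mem_powerset.2 (Finset.subset_univ _),
      Finset.mem_powerset.2 Finset.subset_union_left⟩
  · rintro ⟨W, Sp⟩ hq
    rw [Finset.mem_sigma] at hq ⊢
    refine ⟨Finset.mem_powerset.2 (Finset.subset_univ _), Finset.mem_powerset.2 ?_⟩
    intro x hx
    rw [Finset.mem_sdiff] at hx ⊢
    exact ⟨Finset.mem_univ x, hx.2⟩
  · rintro ⟨Sp, Sn⟩ hp
    rw [Finset.mem_sigma] at hp
    have hdisj : Disjoint Sp Sn := by
      rw [Finset.disjoint_left]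
      intro x hx hxSn
      exact (Finset.mem_sdiff.1 (Finset.mem_powerset.1 hp.2 hxSn)).2 hx
    show (⟨Sp, (Sp ∪ Sn) \ Sp⟩ : Σ _ : Finset (Fin n), Finset (Fin n)) = ⟨Sp, Sn⟩
    rw [Finset.union_sdiff_cancel_left hdisj]
  · rintro ⟨W, Sp⟩ hq
    rw [Finset.mem_sigma] at hq
    show (⟨Sp ∪ (W \ Sp), Sp⟩ : Σ _ : Finset (Fin n), Finset (Fin n)) = ⟨W, Sp⟩
    rw [Finset.union_sdiff_of_subset (Finset.mem_powerset.1 hq.2)]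
  · rintro ⟨Sp, Sn⟩ hp
    rw [Finset.mem_sigma] at hp
    have hdisj : Disjoint Sp Sn := by
      rw [Finset.disjoint_left]
      intro x hx hxSn
      exact (Finset.mem_sdiff.1 (Finset.mem_powerset.1 hp.2 hxSn)).2 hx
    show f Sp Sn = f Sp ((Sp ∪ Sn) \ Sp)
    rw [Finset.union_sdiff_cancel_left hdisj]

end DMU2
namespace DMU2
open DMU
variable {n : ℕ}

lemma perW (D : DeltaMatroid n) (W : Finset (Fin n)) :
    ∑ Sp ∈ W.powerset,
        (MvPolynomial.X 0 : MvPolynomial (Fin 2) ℤ) ^ (n - Sp.card - (W \ Sp).card)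
          * (MvPolynomial.X 1 - 1)
            ^ ((((Sp.card + (W \ Sp).card : ℤ)) - gFam D.feas Sp (W \ Sp)).toNat / 2)
      = ∑ Sp ∈ W.powerset,
          if ∃ F ∈ D.feas, Sp ⊆ F ∧ Disjoint (W \ Sp) F then
            (MvPolynomial.X 0 : MvPolynomial (Fin 2) ℤ) ^ (n - Sp.card - (W \ Sp).card)
              * (MvPolynomial.X 1) ^ activeCard D Sp (W \ Sp)
          else 0 := by
  have hne : D.feas.Nonempty := D.nonempty
  have hex : Exch D.feas := D.exchange
  have hneGW : (D.feas.image (· \ ((Finset.univ : Finset (Fin n)) \ W))).Nonempty :=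
    hne.image _
  have hexGW : Exch (D.feas.image (· \ ((Finset.univ : Finset (Fin n)) \ W))) :=
    exch_proj hex _
  have hGWsub : ∀ H ∈ D.feas.image (· \ ((Finset.univ : Finset (Fin n)) \ W)), H ⊆ W :=
    fun H hH => proj_subset hH
  have hL : ∑ Sp ∈ W.powerset,
        (MvPolynomial.X 0 : MvPolynomial (Fin 2) ℤ) ^ (n - Sp.card - (W \ Sp).card)
          * (MvPolynomial.X 1 - 1)
            ^ ((((Sp.card + (W \ Sp).card : ℤ)) - gFam D.feas Sp (W \ Sp)).toNat / 2)
      = (MvPolynomial.X 0 : MvPolynomial (Fin 2) ℤ) ^ (n - W.card)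
          * ∑ Z ∈ W.powerset, (MvPolynomial.X 1 - 1 : MvPolynomial (Fin 2) ℤ)
              ^ ((D.feas.image (· \ ((Finset.univ : Finset (Fin n)) \ W))).inf' hneGW
                  fun F => (Z ∆ F).card) := by
    rw [Finset.mul_sum]
    refine Finset.sum_congr rfl fun Sp hSp => ?_
    have hSp' : Sp ⊆ W := Finset.mem_powerset.1 hSp
    have hcard : (W \ Sp).card = W.card - Sp.card := Finset.card_sdiff_of_subset hSp'
    have hle : Sp.card ≤ W.card := Finset.card_le_card hSp'
    have hexp : n - Sp.card - (W \ Sp).card = n - W.card := by omega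
    have hee := exponent_eq hne (Sp := Sp) (Sn := W \ Sp) Finset.disjoint_sdiff
    rw [Finset.union_sdiff_of_subset hSp'] at hee
    rw [hexp, hee, ← inf'_image_eq hne (· \ ((Finset.univ : Finset (Fin n)) \ W))
      (fun H => (Sp ∆ H).card)]
  have hR : ∑ Sp ∈ W.powerset,
        (if ∃ F ∈ D.feas, Sp ⊆ F ∧ Disjoint (W \ Sp) F then
          (MvPolynomial.X 0 : MvPolynomial (Fin 2) ℤ) ^ (n - Sp.card - (W \ Sp).card)
            * (MvPolynomial.X 1) ^ activeCard D Sp (W \ Sp)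
        else 0)
      = (MvPolynomial.X 0 : MvPolynomial (Fin 2) ℤ) ^ (n - W.card)
          * ∑ X ∈ D.feas.image (· \ ((Finset.univ : Finset (Fin n)) \ W)),
              (MvPolynomial.X 1 : MvPolynomial (Fin 2) ℤ)
                ^ (Act (D.feas.image (· \ ((Finset.univ : Finset (Fin n)) \ W))) W X).card := by
    have hstep : ∀ Sp ∈ W.powerset,
        (if ∃ F ∈ D.feas, Sp ⊆ F ∧ Disjoint (W \ Sp) F then
          (MvPolynomial.X 0 : MvPolynomial (Fin 2) ℤ) ^ (n - Sp.card - (W \ Sp).card)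
            * (MvPolynomial.X 1) ^ activeCard D Sp (W \ Sp)
        else 0)
        = (if Sp ∈ D.feas.image (· \ ((Finset.univ : Finset (Fin n)) \ W)) then
            (MvPolynomial.X 0 : MvPolynomial (Fin 2) ℤ) ^ (n - W.card)
              * (MvPolynomial.X 1)
                ^ (Act (D.feas.image (· \ ((Finset.univ : Finset (Fin n)) \ W))) W Sp).card
          else 0) := by
      intro Sp hSp
      have hSp' : Sp ⊆ W := Finset.mem_powerset.1 hSp
      have hcard : (W \ Sp).card = W.card - Sp.card := Finset.card_sdiff_of_subset hSp'
      have hle : Sp.card ≤ W.card := Finset.card_le_card hSp'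
      have hexp : n - Sp.card - (W \ Sp).card = n - W.card := by omega
      by_cases h : Sp ∈ D.feas.image (· \ ((Finset.univ : Finset (Fin n)) \ W))
      · rw [if_pos ((indep_iff hSp').2 h), if_pos h, hexp]
        have hact := active_eq D Sp (W \ Sp)
        rw [Finset.union_sdiff_of_subset hSp'] at hact
        rw [hact]
      · rw [if_neg (fun hc => h ((indep_iff hSp').1 hc)), if_neg h]
    rw [Finset.sum_congr rfl hstep, Finset.sum_ite_mem,
      Finset.inter_eq_right.2 (fun H hH => Finset.mem_powerset.2 (proj_subset hH)),
      Finset.mul_sum]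
  rw [hL, hR, cube_identity hneGW hexGW hGWsub]

end DMU2
/-- **Theorem (activity expansion of the U-polynomial).**
`U_D(u, v−1) = Σ_S u^{n−|S|} v^{a(S)}`, the sum over the independent admissible sets `S` of
`D`, where `a(S)` is the number of `S`-active elements. -/
theorem deltaMatroid_U_activity (n : ℕ) (D : DeltaMatroid n) :
    MvPolynomial.aeval
        ![(MvPolynomial.X 0 : MvPolynomial (Fin 2) ℤ), MvPolynomial.X 1 - 1]
        (Upoly (univ : Finset (Fin n)) D.feas)
      = ∑ Sp ∈ (univ : Finset (Fin n)).powerset,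
          ∑ Sn ∈ ((univ \ Sp).powerset.filter
              fun Sn => ∃ F ∈ D.feas, Sp ⊆ F ∧ Disjoint Sn F),
            (MvPolynomial.X 0) ^ (n - Sp.card - Sn.card)
              * (MvPolynomial.X 1) ^ activeCard D Sp Sn := by
  have hLHS : MvPolynomial.aeval
        ![(MvPolynomial.X 0 : MvPolynomial (Fin 2) ℤ), MvPolynomial.X 1 - 1]
        (Upoly (univ : Finset (Fin n)) D.feas)
      = ∑ Sp ∈ (univ : Finset (Fin n)).powerset, ∑ Sn ∈ (univ \ Sp).powerset,
          (MvPolynomial.X 0 : MvPolynomial (Fin 2) ℤ) ^ (n - Sp.card - Sn.card)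
            * (MvPolynomial.X 1 - 1)
              ^ ((((Sp.card + Sn.card : ℤ)) - gFam D.feas Sp Sn).toNat / 2) := by
    rw [Upoly, map_sum]
    refine Finset.sum_congr rfl fun Sp _ => ?_
    rw [map_sum]
    refine Finset.sum_congr rfl fun Sn _ => ?_
    rw [map_mul, map_pow, map_pow, MvPolynomial.aeval_X, MvPolynomial.aeval_X]
    simp only [Matrix.cons_val_zero, Matrix.cons_val_one, Matrix.head_cons, Finset.card_fin]
  rw [hLHS]
  have hRHS : ∀ Sp : Finset (Fin n),
      ∑ Sn ∈ ((univ \ Sp).powerset.filter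
          fun Sn => ∃ F ∈ D.feas, Sp ⊆ F ∧ Disjoint Sn F),
        (MvPolynomial.X 0 : MvPolynomial (Fin 2) ℤ) ^ (n - Sp.card - Sn.card)
          * (MvPolynomial.X 1) ^ activeCard D Sp Sn
      = ∑ Sn ∈ (univ \ Sp).powerset,
          if ∃ F ∈ D.feas, Sp ⊆ F ∧ Disjoint Sn F then
            (MvPolynomial.X 0 : MvPolynomial (Fin 2) ℤ) ^ (n - Sp.card - Sn.card)
              * (MvPolynomial.X 1) ^ activeCard D Sp Sn
          else 0 := fun Sp => Finset.sum_filter _ _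
  rw [Finset.sum_congr rfl fun Sp _ => hRHS Sp]
  rw [DMU2.sum_pairs (fun Sp Sn =>
    (MvPolynomial.X 0 : MvPolynomial (Fin 2) ℤ) ^ (n - Sp.card - Sn.card)
      * (MvPolynomial.X 1 - 1)
        ^ ((((Sp.card + Sn.card : ℤ)) - gFam D.feas Sp Sn).toNat / 2))]
  rw [DMU2.sum_pairs (fun Sp Sn =>
    if ∃ F ∈ D.feas, Sp ⊆ F ∧ Disjoint Sn F then
      (MvPolynomial.X 0 : MvPolynomial (Fin 2) ℤ) ^ (n - Sp.card - Sn.card)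
        * (MvPolynomial.X 1) ^ activeCard D Sp Sn
    else 0)]
  exact Finset.sum_congr rfl fun W _ => DMU2.perW D W
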